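/- Let (G=(V,w); s₁,…,s_k) be a Minimum Multiway Cut instance, let S* be a minimum multiway cut with cut edge set E*, let γ ≥ 1, and let N be a collection of multiway cuts containing S*. Then the following are equivalent: (A) for every γ-perturbation w' of w (i.e., w(u,v) ≤ w'(u,v) ≤ γ·w(u,v) for all pairs) and every multiway cut S' ∉ N with cut edge set E': w'(E') > w'(E*); (B) for every multiway cut S' ∉ N with cut edge set E': w(E'∖E*) > γ·w(E*∖E'). (This is the equivalence of the two definitions of (γ,N)-weak stability for Minimum Multiway Cut.) -/

import Mathlib

open Finset

/-- The pair `{u, v}` is separated by the cut `(S, V∖S)`. -/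
abbrev cutSep {V : Type*} (S : Finset V) (u v : V) : Prop :=
  (u ∈ S ∧ v ∉ S) ∨ (v ∈ S ∧ u ∉ S)

/-- Total weight of the set of unordered pairs `{u,v}` satisfying the symmetric
predicate `P`; the sum over ordered pairs counts each unordered pair twice, whence
the division by `2`. -/
noncomputable def cutWeight {V : Type*} [Fintype V] (w : V → V → ℝ)
    (P : V → V → Prop) : ℝ :=
  have := Classical.propDecidable
  (∑ u, ∑ v, if P u v then w u v else 0) / 2


/-- `f : V → Fin k` is a multiway cut for terminals `s`: vertex `s i` lies in part `i`. -/
def IsMultiwayCut {V : Type*} {k : ℕ} (s : Fin k → V) (f : V → Fin k) : Prop :=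
  ∀ i, f (s i) = i

lemma cutWeight_eq {V : Type*} [Fintype V] (w : V → V → ℝ) (P : V → V → Prop)
    [inst : ∀ u v, Decidable (P u v)] :
    cutWeight w P = (∑ u, ∑ v, if P u v then w u v else 0) / 2 := by
  have h : ∀ u v, (@ite ℝ (P u v) (Classical.propDecidable _) (w u v) 0)
      = if P u v then w u v else 0 := by
    intro u v; by_cases h : P u v <;> simp [h]
  simp only [cutWeight, h]

lemma cw_congr_pred {V : Type*} [Fintype V] (w : V → V → ℝ) (P Q : V → V → Prop)
    (h : ∀ u v, P u v ↔ Q u v) : cutWeight w P = cutWeight w Q := by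
  classical
  rw [cutWeight_eq, cutWeight_eq]
  have hnum : (∑ u, ∑ v, if P u v then w u v else 0)
      = (∑ u, ∑ v, if Q u v then w u v else 0) := by
    apply Finset.sum_congr rfl; intro u _
    apply Finset.sum_congr rfl; intro v _
    by_cases hp : P u v
    · simp [hp, (h u v).mp hp]
    · have hq : ¬ Q u v := fun hq => hp ((h u v).mpr hq)
      simp [hp, hq]
  rw [hnum]

lemma cw_split {V : Type*} [Fintype V] (w : V → V → ℝ) (P Q : V → V → Prop) :
    cutWeight w P = cutWeight w (fun u v => P u v ∧ Q u v)
      + cutWeight w (fun u v => P u v ∧ ¬ Q u v) := by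
  classical
  rw [cutWeight_eq, cutWeight_eq, cutWeight_eq, ← add_div]
  have hnum : (∑ u, ∑ v, if P u v then w u v else 0)
      = (∑ u, ∑ v, if P u v ∧ Q u v then w u v else 0)
        + (∑ u, ∑ v, if P u v ∧ ¬ Q u v then w u v else 0) := by
    rw [← Finset.sum_add_distrib]
    apply Finset.sum_congr rfl; intro u _
    rw [← Finset.sum_add_distrib]
    apply Finset.sum_congr rfl; intro v _
    by_cases hp : P u v <;> by_cases hq : Q u v <;> simp [hp, hq]
  rw [hnum]

lemma cw_congr_weight {V : Type*} [Fintype V] (w₁ w₂ : V → V → ℝ) (P : V → V → Prop)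
    (h : ∀ u v, P u v → w₁ u v = w₂ u v) : cutWeight w₁ P = cutWeight w₂ P := by
  classical
  rw [cutWeight_eq, cutWeight_eq]
  have hnum : (∑ u, ∑ v, if P u v then w₁ u v else 0)
      = (∑ u, ∑ v, if P u v then w₂ u v else 0) := by
    apply Finset.sum_congr rfl; intro u _
    apply Finset.sum_congr rfl; intro v _
    by_cases hp : P u v
    · simp [hp, h u v hp]
    · simp [hp]
  rw [hnum]

lemma cw_mono {V : Type*} [Fintype V] (w₁ w₂ : V → V → ℝ) (P : V → V → Prop)
    (h : ∀ u v, P u v → w₁ u v ≤ w₂ u v) : cutWeight w₁ P ≤ cutWeight w₂ P := by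
  classical
  rw [cutWeight_eq, cutWeight_eq]
  have key : (∑ u, ∑ v, if P u v then w₁ u v else 0)
      ≤ (∑ u, ∑ v, if P u v then w₂ u v else 0) := by
    refine Finset.sum_le_sum fun u _ => Finset.sum_le_sum fun v _ => ?_
    by_cases hp : P u v
    · simp only [if_pos hp]; exact h u v hp
    · simp [hp]
  linarith

lemma cw_scale {V : Type*} [Fintype V] (w : V → V → ℝ) (P : V → V → Prop) (c : ℝ) :
    cutWeight (fun u v => c * w u v) P = c * cutWeight w P := by
  classical
  rw [cutWeight_eq, cutWeight_eq, ← mul_div_assoc]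
  have hnum : (∑ u, ∑ v, if P u v then c * w u v else 0)
      = c * (∑ u, ∑ v, if P u v then w u v else 0) := by
    rw [Finset.mul_sum]
    apply Finset.sum_congr rfl; intro u _
    rw [Finset.mul_sum]
    apply Finset.sum_congr rfl; intro v _
    by_cases hp : P u v <;> simp [hp]
  rw [hnum]

/-- Equivalence of the two definitions of `(γ, N)`-weak stability for
Minimum Multiway Cut: for a minimum multiway cut `f*` and a collection `N` of multiway
cuts containing `f*`, the following are equivalent:
(A) for every `γ`-perturbation `w'` of `w` and every multiway cut `g ∉ N`,
`w'(E') > w'(E*)`;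
(B) for every multiway cut `g ∉ N`, `w(E'∖E*) > γ·w(E*∖E')`. -/
theorem stmt11 {V : Type*} [Fintype V] {k : ℕ}
    (w : V → V → ℝ) (hsymm : ∀ u v, w u v = w v u) (hnonneg : ∀ u v, 0 ≤ w u v)
    (γ : ℝ) (hγ : 1 ≤ γ)
    (s : Fin k → V) (hs : Function.Injective s)
    (fstar : V → Fin k) (hfstar : IsMultiwayCut s fstar)
    (hmin : ∀ g : V → Fin k, IsMultiwayCut s g →
      cutWeight w (fun u v => fstar u ≠ fstar v) ≤ cutWeight w (fun u v => g u ≠ g v))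
    (N : Set (V → Fin k)) (hfN : fstar ∈ N) :
    (∀ w' : V → V → ℝ, (∀ u v, w' u v = w' v u) →
        (∀ u v, w u v ≤ w' u v ∧ w' u v ≤ γ * w u v) →
        ∀ g : V → Fin k, IsMultiwayCut s g → g ∉ N →
          cutWeight w' (fun u v => fstar u ≠ fstar v) <
            cutWeight w' (fun u v => g u ≠ g v)) ↔
    (∀ g : V → Fin k, IsMultiwayCut s g → g ∉ N →
        γ * cutWeight w (fun u v => fstar u ≠ fstar v ∧ g u = g v) <
          cutWeight w (fun u v => g u ≠ g v ∧ fstar u = fstar v)) := by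
  classical
  constructor
  · -- (A) → (B)
    intro hA g hg hgN
    set w' : V → V → ℝ :=
      fun u v => if fstar u ≠ fstar v ∧ g u = g v then γ * w u v else w u v with hw'
    have hw'symm : ∀ u v, w' u v = w' v u := by
      intro u v
      by_cases h : fstar u ≠ fstar v ∧ g u = g v
      · have h' : fstar v ≠ fstar u ∧ g v = g u := ⟨h.1.symm, h.2.symm⟩
        simp only [hw', if_pos h, if_pos h', hsymm u v]
      · have h' : ¬ (fstar v ≠ fstar u ∧ g v = g u) := fun h' => h ⟨h'.1.symm, h'.2.symm⟩
        simp only [hw', if_neg h, if_neg h', hsymm u v]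
    have hpert : ∀ u v, w u v ≤ w' u v ∧ w' u v ≤ γ * w u v := by
      intro u v
      by_cases h : fstar u ≠ fstar v ∧ g u = g v
      · simp only [hw', if_pos h]
        exact ⟨le_mul_of_one_le_left (hnonneg u v) hγ, le_refl _⟩
      · simp only [hw', if_neg h]
        exact ⟨le_refl _, le_mul_of_one_le_left (hnonneg u v) hγ⟩
    have hlt := hA w' hw'symm hpert g hg hgN
    -- splits
    have hX : cutWeight w' (fun u v => fstar u ≠ fstar v)
        = cutWeight w' (fun u v => fstar u ≠ fstar v ∧ g u ≠ g v)
          + cutWeight w' (fun u v => fstar u ≠ fstar v ∧ g u = g v) := by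
      rw [cw_split w' _ (fun u v => g u ≠ g v)]
      congr 1
      exact cw_congr_pred _ _ _ (fun u v => by simp)
    have hY : cutWeight w' (fun u v => g u ≠ g v)
        = cutWeight w' (fun u v => fstar u ≠ fstar v ∧ g u ≠ g v)
          + cutWeight w' (fun u v => g u ≠ g v ∧ fstar u = fstar v) := by
      rw [cw_split w' _ (fun u v => fstar u ≠ fstar v)]
      congr 1
      · exact cw_congr_pred _ _ _ (fun u v => by tauto)
      · exact cw_congr_pred _ _ _ (fun u v => by simp)
    have hD : cutWeight w' (fun u v => fstar u ≠ fstar v ∧ g u = g v)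
        = γ * cutWeight w (fun u v => fstar u ≠ fstar v ∧ g u = g v) := by
      rw [← cw_scale]
      exact cw_congr_weight _ _ _ (fun u v h => by simp only [hw', if_pos h])
    have hC : cutWeight w' (fun u v => fstar u ≠ fstar v ∧ g u ≠ g v)
        = cutWeight w (fun u v => fstar u ≠ fstar v ∧ g u ≠ g v) := by
      refine cw_congr_weight _ _ _ (fun u v h => ?_)
      have : ¬ (fstar u ≠ fstar v ∧ g u = g v) := fun h' => h.2 h'.2
      simp only [hw', if_neg this]
    have hE : cutWeight w' (fun u v => g u ≠ g v ∧ fstar u = fstar v)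
        = cutWeight w (fun u v => g u ≠ g v ∧ fstar u = fstar v) := by
      refine cw_congr_weight _ _ _ (fun u v h => ?_)
      have : ¬ (fstar u ≠ fstar v ∧ g u = g v) := fun h' => h'.1 h.2
      simp only [hw', if_neg this]
    rw [hX, hY, hD, hC, hE] at hlt
    linarith
  · -- (B) → (A)
    intro hB w' hw'symm hpert g hg hgN
    have key := hB g hg hgN
    have hX : cutWeight w' (fun u v => fstar u ≠ fstar v)
        = cutWeight w' (fun u v => fstar u ≠ fstar v ∧ g u ≠ g v)
          + cutWeight w' (fun u v => fstar u ≠ fstar v ∧ g u = g v) := by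
      rw [cw_split w' _ (fun u v => g u ≠ g v)]
      congr 1
      exact cw_congr_pred _ _ _ (fun u v => by simp)
    have hY : cutWeight w' (fun u v => g u ≠ g v)
        = cutWeight w' (fun u v => fstar u ≠ fstar v ∧ g u ≠ g v)
          + cutWeight w' (fun u v => g u ≠ g v ∧ fstar u = fstar v) := by
      rw [cw_split w' _ (fun u v => fstar u ≠ fstar v)]
      congr 1
      · exact cw_congr_pred _ _ _ (fun u v => by tauto)
      · exact cw_congr_pred _ _ _ (fun u v => by simp)
    have hD : cutWeight w' (fun u v => fstar u ≠ fstar v ∧ g u = g v)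
        ≤ γ * cutWeight w (fun u v => fstar u ≠ fstar v ∧ g u = g v) := by
      rw [← cw_scale]
      exact cw_mono _ _ _ (fun u v _ => (hpert u v).2)
    have hE : cutWeight w (fun u v => g u ≠ g v ∧ fstar u = fstar v)
        ≤ cutWeight w' (fun u v => g u ≠ g v ∧ fstar u = fstar v) :=
      cw_mono _ _ _ (fun u v _ => (hpert u v).1)
    rw [hX, hY]
    linarith
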